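/- arXiv:1708.08269 — 3 statements merged into one kernel-verified Lean document; each statement's English description precedes it below -/
import Mathlib

section
/- Let φ : ℂ → ℝ be a Borel measurable radial function on the unit disc, i.e. φ(z) = φ(z') whenever |z| = |z'| < 1. Let f : ℂ → ℂ be holomorphic on the open unit disc Δ = {z : |z| < 1}. Then, as an inequality of Lebesgue integrals with values in [0,+∞], |f(0)|² · ∫_{Δ} e^{-φ(z)} dλ(z) ≤ ∫_{Δ} |f(z)|² e^{-φ(z)} dλ(z). In particular, when f(0) = 1, the constant function 1 has the smallest weighted L²-norm among all holomorphic extensions of the value 1 at the origin. -/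
open MeasureTheory Set Real


theorem lintegral_comp_polarCoord_symm' (h : ℝ × ℝ → ENNReal) :
    (∫⁻ p in polarCoord.target, ENNReal.ofReal p.1 * h (polarCoord.symm p)) = ∫⁻ p, h p := by
  set B : ℝ × ℝ → ℝ × ℝ →L[ℝ] ℝ × ℝ := fun p =>
    LinearMap.toContinuousLinearMap (Matrix.toLin (Module.Basis.finTwoProd ℝ) (Module.Basis.finTwoProd ℝ)
      !![Real.cos p.2, -p.1 * Real.sin p.2; Real.sin p.2, p.1 * Real.cos p.2])
  have A : ∀ p ∈ polarCoord.target, HasFDerivWithinAt polarCoord.symm (B p) polarCoord.target p :=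
    fun p _ => (hasFDerivAt_polarCoord_symm p).hasFDerivWithinAt
  have B_det : ∀ p, (B p).det = p.1 := by
    intro p
    conv_rhs => rw [← one_mul p.1, ← cos_sq_add_sin_sq p.2]
    simp only [B, neg_mul, LinearMap.det_toContinuousLinearMap, LinearMap.det_toLin,
      Matrix.det_fin_two_of, sub_neg_eq_add]
    ring
  symm
  calc
    ∫⁻ p, h p = ∫⁻ p in polarCoord.source, h p := by
      rw [← setLIntegral_univ]
      exact setLIntegral_congr polarCoord_source_ae_eq_univ.symm
    _ = ∫⁻ p in polarCoord.symm '' polarCoord.target, h p := by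
      rw [polarCoord.symm_image_target_eq_source]
    _ = ∫⁻ p in polarCoord.target, ENNReal.ofReal |(B p).det| * h (polarCoord.symm p) := by
      exact lintegral_image_eq_lintegral_abs_det_fderiv_mul volume
        polarCoord.open_target.measurableSet A polarCoord.symm.injOn h
    _ = ∫⁻ p in polarCoord.target, ENNReal.ofReal p.1 * h (polarCoord.symm p) := by
      apply setLIntegral_congr_fun polarCoord.open_target.measurableSet
      intro p hp; dsimp only
      rw [B_det, abs_of_pos hp.1]

theorem Complex.lintegral_comp_polarCoord_symm' (h : ℂ → ENNReal) :
    (∫⁻ p in polarCoord.target, ENNReal.ofReal p.1 * h (Complex.polarCoord.symm p)) = ∫⁻ z, h z := by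
  rw [← (Complex.volume_preserving_equiv_real_prod.symm).lintegral_comp_emb
    Complex.measurableEquivRealProd.symm.measurableEmbedding, ← _root_.lintegral_comp_polarCoord_symm' fun p => h (Complex.measurableEquivRealProd.symm p)]
  rfl

theorem lintegral_ball_polar (g : ℂ → ENNReal) :
    ∫⁻ z in Metric.ball (0:ℂ) 1, g z
      = ∫⁻ p in Ioo (0:ℝ) 1 ×ˢ Ioo (-π) π, ENNReal.ofReal p.1 * g (Complex.polarCoord.symm p) := by
  rw [← lintegral_indicator measurableSet_ball _,
    ← Complex.lintegral_comp_polarCoord_symm' ((Metric.ball (0:ℂ) 1).indicator g)]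
  have hS : MeasurableSet {q : ℝ × ℝ | |q.1| < 1} := by
    have : {q : ℝ × ℝ | |q.1| < 1} = (fun q : ℝ × ℝ => |q.1|) ⁻¹' Iio 1 := rfl
    rw [this]
    exact (measurable_fst.abs) measurableSet_Iio
  have key : ∀ p : ℝ × ℝ, ENNReal.ofReal p.1 * (Metric.ball (0:ℂ) 1).indicator g
      (Complex.polarCoord.symm p)
      = ({q : ℝ × ℝ | |q.1| < 1}).indicator
          (fun q => ENNReal.ofReal q.1 * g (Complex.polarCoord.symm q)) p := by
    intro p
    have hmem : Complex.polarCoord.symm p ∈ Metric.ball (0:ℂ) 1 ↔ |p.1| < 1 := by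
      rw [mem_ball_zero_iff, Complex.norm_polarCoord_symm]
    by_cases hp : |p.1| < 1
    · rw [Set.indicator_of_mem (hmem.mpr hp),
        Set.indicator_of_mem (show p ∈ {q : ℝ × ℝ | |q.1| < 1} from hp)]
    · rw [Set.indicator_of_notMem (fun h => hp (hmem.mp h)),
        Set.indicator_of_notMem (show p ∉ {q : ℝ × ℝ | |q.1| < 1} from hp), mul_zero]
  simp_rw [key]
  rw [lintegral_indicator hS _, Measure.restrict_restrict hS]
  have hset : {q : ℝ × ℝ | |q.1| < 1} ∩ polarCoord.target = Ioo (0:ℝ) 1 ×ˢ Ioo (-π) π := by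
    rw [polarCoord_target]
    ext ⟨r, θ⟩
    simp only [mem_inter_iff, mem_setOf_eq, mem_prod, mem_Ioo, mem_Ioi]
    constructor
    · rintro ⟨h1, h2, h3⟩
      exact ⟨⟨h2, (abs_lt.mp h1).2⟩, h3⟩
    · rintro ⟨⟨h2, h1⟩, h3⟩
      exact ⟨abs_lt.mpr ⟨by linarith, h1⟩, h2, h3⟩
  rw [hset]

theorem submean_aux (f : ℂ → ℂ) (hf : ∀ z ∈ Metric.ball (0 : ℂ) 1, DifferentiableAt ℂ f z)
    {r : ℝ} (hr0 : 0 < r) (hr1 : r < 1) :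
    2 * π * ‖f 0‖ ^ 2
      ≤ ∫ θ in Ioo (-π) π, ‖f (Complex.polarCoord.symm (r, θ))‖ ^ 2 := by
  have hmap : ∀ θ : ℝ, Complex.polarCoord.symm (r, θ) = circleMap 0 r θ := by
    intro θ
    simp [Complex.polarCoord_symm_apply, circleMap_zero, Complex.exp_mul_I]
  simp_rw [hmap]
  set g : ℂ → ℂ := fun z => f z * f z with hg
  have hball : Metric.closedBall (0:ℂ) r ⊆ Metric.ball (0:ℂ) 1 := by
    apply Metric.closedBall_subset_ball hr1
  have hdg : DifferentiableOn ℂ g (Metric.closedBall 0 r) := by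
    intro z hz
    exact ((hf z (hball hz)).mul (hf z (hball hz))).differentiableWithinAt
  have hC := hdg.circleIntegral_sub_inv_smul (w := 0) (Metric.mem_ball_self hr0)
  have hCI : (∮ z in C(0, r), (z - 0)⁻¹ • g z)
      = ∫ θ in (0:ℝ)..2 * π, Complex.I • g (circleMap 0 r θ) := by
    rw [circleIntegral]
    apply intervalIntegral.integral_congr
    intro θ _
    simp only []
    rw [deriv_circleMap, sub_zero, smul_smul, mul_comm, ← mul_assoc,
      inv_mul_cancel₀ (circleMap_ne_center hr0.ne')]
    simp
  have key : 2 * π * ‖f 0‖ ^ 2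
      ≤ ∫ θ in (0:ℝ)..2 * π, ‖f (circleMap 0 r θ)‖ ^ 2 := by
    have h1 : ‖(2 * π * Complex.I : ℂ) • g 0‖ = 2 * π * ‖f 0‖ ^ 2 := by
      simp [hg, norm_smul, map_mul, Complex.norm_real,
        abs_of_pos Real.pi_pos, sq]
    calc 2 * π * ‖f 0‖ ^ 2 = ‖(2 * π * Complex.I : ℂ) • g 0‖ := h1.symm
      _ = ‖∫ θ in (0:ℝ)..2 * π, Complex.I • g (circleMap 0 r θ)‖ := by rw [← hC, hCI]
      _ ≤ ∫ θ in (0:ℝ)..2 * π, ‖Complex.I • g (circleMap 0 r θ)‖ := by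
          apply intervalIntegral.norm_integral_le_integral_norm
          positivity
      _ = ∫ θ in (0:ℝ)..2 * π, ‖f (circleMap 0 r θ)‖ ^ 2 := by
          apply intervalIntegral.integral_congr
          intro θ _
          simp [hg, norm_smul, map_mul, sq]
  have hper : Function.Periodic (fun θ => ‖f (circleMap 0 r θ)‖ ^ 2) (2 * π) :=
    fun θ => by simp [(periodic_circleMap 0 r θ : _)]
  have hshift := hper.intervalIntegral_add_eq (-π) 0
  rw [zero_add] at hshift
  have : -π + 2 * π = π := by ring
  rw [this] at hshift
  rw [← hshift] at key
  rwa [intervalIntegral.integral_of_le (by linarith [Real.pi_pos] : -π ≤ π),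
    integral_Ioc_eq_integral_Ioo] at key


/-- For a Borel measurable radial weight `φ` on the unit disc and
`f` holomorphic on the unit disc,
`|f(0)|² ∫_Δ e^{-φ} dλ ≤ ∫_Δ |f|² e^{-φ} dλ` in `[0,∞]`. -/
theorem mean_value_radial_weight
    (φ : ℂ → ℝ) (hφ : Measurable φ)
    (hrad : ∀ z z' : ℂ, ‖z‖ = ‖z'‖ → ‖z‖ < 1 →
      φ z = φ z')
    (f : ℂ → ℂ) (hf : ∀ z ∈ Metric.ball (0 : ℂ) 1, DifferentiableAt ℂ f z) :
    ENNReal.ofReal (‖f 0‖ ^ 2) *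
        ∫⁻ z in Metric.ball (0 : ℂ) 1, ENNReal.ofReal (Real.exp (-φ z))
      ≤ ∫⁻ z in Metric.ball (0 : ℂ) 1,
          ENNReal.ofReal (‖f z‖ ^ 2 * Real.exp (-φ z)) := by
  have hT : MeasurableSet (Ioo (0:ℝ) 1 ×ˢ Ioo (-π) π) :=
    measurableSet_Ioo.prod measurableSet_Ioo
  have hcc : Continuous (⇑Complex.polarCoord.symm) := by
    have h : ⇑Complex.polarCoord.symm
        = fun p : ℝ × ℝ => (p.1 : ℂ) * (Real.cos p.2 + Real.sin p.2 * Complex.I) :=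
      funext Complex.polarCoord_symm_apply
    rw [h]; fun_prop
  have hfball : ContinuousOn f (Metric.ball (0:ℂ) 1) :=
    fun z hz => (hf z hz).continuousAt.continuousWithinAt
  have habs : ∀ p : ℝ × ℝ, ‖Complex.polarCoord.symm p‖ = |p.1| :=
    Complex.norm_polarCoord_symm
  have hmem : ∀ p : ℝ × ℝ, p ∈ Ioo (0:ℝ) 1 ×ˢ Ioo (-π) π →
      Complex.polarCoord.symm p ∈ Metric.ball (0:ℂ) 1 := by
    intro p hp
    rw [mem_ball_zero_iff, habs, abs_of_pos hp.1.1]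
    exact hp.1.2
  have hradial : ∀ p ∈ Ioo (0:ℝ) 1 ×ˢ Ioo (-π) π,
      φ (Complex.polarCoord.symm p) = φ (p.1 : ℂ) := by
    intro p hp
    apply hrad
    · rw [habs, Complex.norm_real, Real.norm_eq_abs]
    · rw [habs, abs_of_pos hp.1.1]; exact hp.1.2
  set K : ℝ → ENNReal :=
    fun r => ENNReal.ofReal r * ENNReal.ofReal (Real.exp (-φ (r:ℂ))) with hKdef
  have hKtop : ∀ r, K r ≠ ⊤ :=
    fun r => ENNReal.mul_ne_top ENNReal.ofReal_ne_top ENNReal.ofReal_ne_top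
  have hKmeas : Measurable fun p : ℝ × ℝ => K p.1 := by
    apply (measurable_fst.ennreal_ofReal).mul
    exact (Real.measurable_exp.comp
      ((hφ.comp (Complex.measurable_ofReal.comp measurable_fst)).neg)).ennreal_ofReal
  have hprodmeas : volume.restrict (Ioo (0:ℝ) 1 ×ˢ Ioo (-π) π)
      = (volume.restrict (Ioo (0:ℝ) 1)).prod (volume.restrict (Ioo (-π) π)) := by
    rw [Measure.prod_restrict]
    rfl
  -- left-hand side weight integral in polar form
  have hW : ∫⁻ z in Metric.ball (0:ℂ) 1, ENNReal.ofReal (Real.exp (-φ z))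
      = ∫⁻ r in Ioo (0:ℝ) 1, K r * ENNReal.ofReal (2 * π) := by
    rw [lintegral_ball_polar]
    have step1 : ∫⁻ p in Ioo (0:ℝ) 1 ×ˢ Ioo (-π) π,
        ENNReal.ofReal p.1 * ENNReal.ofReal (Real.exp (-φ (Complex.polarCoord.symm p)))
        = ∫⁻ p in Ioo (0:ℝ) 1 ×ˢ Ioo (-π) π, K p.1 := by
      apply setLIntegral_congr_fun hT
      intro p hp; dsimp only
      rw [hradial p hp]
    rw [step1, hprodmeas, lintegral_prod _ (by
      rw [← hprodmeas]; exact hKmeas.aemeasurable.restrict)]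
    simp only []
    rw [← setLIntegral_congr_fun (f := fun r => K r * ENNReal.ofReal (2 * π)) measurableSet_Ioo (by
      intro r hr; dsimp only
      rw [setLIntegral_const, Real.volume_Ioo, (by ring : π - -π = 2 * π)])]
  -- right-hand side integral in polar form
  have hR : ∫⁻ z in Metric.ball (0:ℂ) 1,
        ENNReal.ofReal (‖f z‖ ^ 2 * Real.exp (-φ z))
      = ∫⁻ r in Ioo (0:ℝ) 1, K r * ∫⁻ θ in Ioo (-π) π,
          ENNReal.ofReal (‖f (Complex.polarCoord.symm (r, θ))‖ ^ 2) := by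
    rw [lintegral_ball_polar]
    have step1 : ∫⁻ p in Ioo (0:ℝ) 1 ×ˢ Ioo (-π) π,
        ENNReal.ofReal p.1 *
          ENNReal.ofReal (‖f (Complex.polarCoord.symm p)‖ ^ 2 *
            Real.exp (-φ (Complex.polarCoord.symm p)))
        = ∫⁻ p in Ioo (0:ℝ) 1 ×ˢ Ioo (-π) π,
            K p.1 * ENNReal.ofReal (‖f (Complex.polarCoord.symm p)‖ ^ 2) := by
      apply setLIntegral_congr_fun hT
      intro p hp; dsimp only
      rw [hradial p hp, ENNReal.ofReal_mul (by positivity)]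
      ring
    rw [step1]
    have hmeasH : AEMeasurable
        (fun p : ℝ × ℝ => K p.1 *
          ENNReal.ofReal (‖f (Complex.polarCoord.symm p)‖ ^ 2))
        ((volume.restrict (Ioo (0:ℝ) 1)).prod (volume.restrict (Ioo (-π) π))) := by
      rw [← hprodmeas]
      apply AEMeasurable.mul hKmeas.aemeasurable.restrict
      apply AEMeasurable.ennreal_ofReal
      have hcont : ContinuousOn
          (fun p : ℝ × ℝ => ‖f (Complex.polarCoord.symm p)‖ ^ 2)
          (Ioo (0:ℝ) 1 ×ˢ Ioo (-π) π) := by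
        apply ContinuousOn.pow
        exact continuous_norm.comp_continuousOn
          (hfball.comp hcc.continuousOn hmem)
      exact hcont.aemeasurable hT
    rw [hprodmeas, lintegral_prod _ hmeasH]
    simp only []
    apply setLIntegral_congr_fun measurableSet_Ioo
    intro r hr; dsimp only
    rw [lintegral_const_mul' _ _ (hKtop r)]
  -- the submean value inequality, in ENNReal form
  have hsub : ∀ r ∈ Ioo (0:ℝ) 1,
      ENNReal.ofReal (2 * π) * ENNReal.ofReal (‖f 0‖ ^ 2)
        ≤ ∫⁻ θ in Ioo (-π) π,
            ENNReal.ofReal (‖f (Complex.polarCoord.symm (r, θ))‖ ^ 2) := by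
    intro r hr
    have hc2 : Continuous fun θ : ℝ =>
        ‖f (Complex.polarCoord.symm (r, θ))‖ ^ 2 := by
      apply Continuous.pow
      apply continuous_norm.comp
      apply hfball.comp_continuous (hcc.comp (continuous_const.prodMk continuous_id))
      intro θ
      simp only [Function.comp_apply, id_eq]
      rw [mem_ball_zero_iff, habs, abs_of_pos hr.1]
      exact hr.2
    have hint : IntegrableOn
        (fun θ : ℝ => ‖f (Complex.polarCoord.symm (r, θ))‖ ^ 2)
        (Ioo (-π) π) :=
      (hc2.integrableOn_Icc).mono_set Ioo_subset_Icc_self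
    rw [← ofReal_integral_eq_lintegral_ofReal hint
      (Filter.Eventually.of_forall fun θ => by positivity)]
    calc ENNReal.ofReal (2 * π) * ENNReal.ofReal (‖f 0‖ ^ 2)
        = ENNReal.ofReal (2 * π * ‖f 0‖ ^ 2) :=
          (ENNReal.ofReal_mul (by positivity)).symm
      _ ≤ _ := ENNReal.ofReal_le_ofReal (submean_aux f hf hr.1 hr.2)
  calc ENNReal.ofReal (‖f 0‖ ^ 2) *
        ∫⁻ z in Metric.ball (0 : ℂ) 1, ENNReal.ofReal (Real.exp (-φ z))
      = ∫⁻ r in Ioo (0:ℝ) 1,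
          ENNReal.ofReal (‖f 0‖ ^ 2) * (K r * ENNReal.ofReal (2 * π)) := by
        rw [hW, lintegral_const_mul' _ _ ENNReal.ofReal_ne_top]
    _ ≤ ∫⁻ r in Ioo (0:ℝ) 1, K r * ∫⁻ θ in Ioo (-π) π,
          ENNReal.ofReal (‖f (Complex.polarCoord.symm (r, θ))‖ ^ 2) := by
        apply setLIntegral_mono' measurableSet_Ioo
        intro r hr
        calc ENNReal.ofReal (‖f 0‖ ^ 2) * (K r * ENNReal.ofReal (2 * π))
            = K r * (ENNReal.ofReal (2 * π) * ENNReal.ofReal (‖f 0‖ ^ 2)) := by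
              ring
          _ ≤ _ := mul_le_mul_right (hsub r hr) _
    _ = _ := hR.symm
end

section
/- Let Ω ⊆ ℂ be an open set and let φ : Ω → ℝ be upper semicontinuous. Define the Hartogs domain Ω̃ = {(z,w) ∈ ℂ² : z ∈ Ω, |w|² < e^{-φ(z)}}, which is an open subset of ℂ². Let F : ℂ² → ℂ be holomorphic on Ω̃. Then, as an inequality of Lebesgue integrals with values in [0,+∞], π · ∫_{Ω} |F(z,0)|² e^{-φ(z)} dλ(z) ≤ ∫_{Ω̃} |F(z,w)|² dλ(z,w), where λ denotes Lebesgue measure on ℂ and on ℂ² respectively. -/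
open MeasureTheory Set Real
open Metric Filter


lemma circle_mean (f : ℂ → ℂ) (s : ℝ) (hs : 0 < s)
    (hf : DifferentiableOn ℂ f (Metric.closedBall 0 s)) :
    2 * π * ‖f 0‖ ^ 2 ≤
      ∫ θ in (0:ℝ)..(2*π), ‖f (circleMap 0 s θ)‖ ^ 2 := by
  have hg : DifferentiableOn ℂ (fun z => f z ^ 2) (Metric.closedBall 0 s) := hf.pow 2
  have h0 : (0:ℂ) ∈ Metric.ball (0:ℂ) s := Metric.mem_ball_self hs
  have hc := hg.circleIntegral_sub_inv_smul h0
  simp only [circleIntegral, deriv_circleMap, smul_eq_mul] at hc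
  have hne : ∀ θ : ℝ, circleMap 0 s θ ≠ 0 := fun θ => circleMap_ne_center hs.ne'
  have hint : ∀ θ : ℝ, circleMap 0 s θ * Complex.I *
      ((circleMap 0 s θ - 0)⁻¹ * f (circleMap 0 s θ) ^ 2)
      = Complex.I * f (circleMap 0 s θ) ^ 2 := by
    intro θ
    rw [sub_zero]
    field_simp [hne θ]
  simp_rw [hint] at hc
  rw [intervalIntegral.integral_const_mul] at hc
  have h2 : (∫ θ in (0:ℝ)..(2*π), f (circleMap 0 s θ) ^ 2) = 2 * (π:ℂ) * f 0 ^ 2 := by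
    apply mul_left_cancel₀ Complex.I_ne_zero
    rw [hc]; ring
  have hb := intervalIntegral.norm_integral_le_integral_norm
    (μ := volume) (f := fun θ => f (circleMap 0 s θ) ^ 2) (a := 0) (b := 2*π) (by positivity)
  rw [h2] at hb
  calc 2 * π * ‖f 0‖ ^ 2 = ‖2 * (π:ℂ) * f 0 ^ 2‖ := by
        simp [map_mul, map_pow, abs_of_pos pi_pos]
    _ ≤ ∫ θ in (0:ℝ)..(2*π), ‖f (circleMap 0 s θ) ^ 2‖ := hb
    _ = ∫ θ in (0:ℝ)..(2*π), ‖f (circleMap 0 s θ)‖ ^ 2 := by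
        simp

lemma ball_mean (f : ℂ → ℂ) (r : ℝ) (hr : 0 < r)
    (hf : DifferentiableOn ℂ f (Metric.closedBall 0 r)) :
    π * (‖f 0‖ ^ 2 * r ^ 2) ≤
      ∫ w in Metric.ball (0:ℂ) r, ‖f w‖ ^ 2 := by
  set c := ‖f 0‖ ^ 2 with hc
  set v : ℂ → ℝ := fun w => ‖f w‖ ^ 2 with hv
  have hvc : ContinuousOn v (Metric.closedBall 0 r) :=
    (continuous_norm.comp_continuousOn hf.continuousOn).pow 2
  set k : ℝ × ℝ → ℝ := fun p => p.1 * v (↑p.1 * Complex.exp (↑p.2 * Complex.I)) with hk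
  set B : Set (ℝ × ℝ) := Ioo (0:ℝ) r ×ˢ Ioo (-π) π with hB
  have hsymm : ∀ p : ℝ × ℝ, Complex.polarCoord.symm p = ↑p.1 * Complex.exp (↑p.2 * Complex.I) := by
    intro p
    rw [Complex.polarCoord_symm_apply, Complex.exp_mul_I, Complex.ofReal_cos, Complex.ofReal_sin]
  -- Step 1 : polar coordinates
  have step1 : (∫ w in Metric.ball (0:ℂ) r, v w) = ∫ p in B, k p := by
    have hpol := Complex.integral_comp_polarCoord_symm ((Metric.ball (0:ℂ) r).indicator v)
    rw [integral_indicator measurableSet_ball] at hpol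
    rw [← hpol]
    rw [← integral_indicator polarCoord.open_target.measurableSet,
        ← integral_indicator (measurableSet_Ioo.prod measurableSet_Ioo)]
    congr 1
    funext p
    by_cases hp : p ∈ polarCoord.target
    · have hp1 : 0 < p.1 := hp.1
      rw [indicator_of_mem hp]
      by_cases hlt : p.1 < r
      · have hpB : p ∈ B := ⟨⟨hp1, hlt⟩, hp.2⟩
        rw [indicator_of_mem hpB]
        have hmem : Complex.polarCoord.symm p ∈ Metric.ball (0:ℂ) r := by
          rw [mem_ball_zero_iff, Complex.norm_polarCoord_symm,
            abs_of_pos hp1]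
          exact hlt
        rw [indicator_of_mem hmem, smul_eq_mul, hsymm p]
      · have hnmem : Complex.polarCoord.symm p ∉ Metric.ball (0:ℂ) r := by
          rw [mem_ball_zero_iff, Complex.norm_polarCoord_symm,
            abs_of_pos hp1]
          exact hlt
        have hpB : p ∉ B := fun h => hlt h.1.2
        rw [indicator_of_notMem hpB, indicator_of_notMem hnmem, smul_zero]
    · have hpB : p ∉ B := fun h => hp ⟨h.1.1, h.2⟩
      rw [indicator_of_notMem hp, indicator_of_notMem hpB]
  -- integrability of k on B
  have hKcomp : IsCompact (Icc (0:ℝ) r ×ˢ Icc (-π) π) := isCompact_Icc.prod isCompact_Icc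
  have he : Continuous fun p : ℝ × ℝ => (↑p.1 : ℂ) * Complex.exp (↑p.2 * Complex.I) := by
    exact (Complex.continuous_ofReal.comp continuous_fst).mul
      (Complex.continuous_exp.comp ((Complex.continuous_ofReal.comp continuous_snd).mul
        continuous_const))
  have hmaps : MapsTo (fun p : ℝ × ℝ => (↑p.1 : ℂ) * Complex.exp (↑p.2 * Complex.I))
      (Icc (0:ℝ) r ×ˢ Icc (-π) π) (Metric.closedBall 0 r) := by
    intro p hp
    rw [Metric.mem_closedBall, Complex.dist_eq, sub_zero]
    calc ‖(↑p.1 : ℂ) * Complex.exp (↑p.2 * Complex.I)‖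
        = |p.1| * ‖Complex.exp (↑p.2 * Complex.I)‖ := by
          rw [norm_mul, Complex.norm_real, Real.norm_eq_abs]
      _ ≤ r := by
          rw [Complex.norm_exp]
          simp only [Complex.mul_re, Complex.ofReal_re, Complex.I_re, Complex.ofReal_im,
            Complex.I_im, mul_zero, mul_one, zero_sub, mul_zero, neg_zero, Real.exp_zero,
            mul_one]
          rw [abs_of_nonneg hp.1.1]
          exact hp.1.2
  have hkc : ContinuousOn k (Icc (0:ℝ) r ×ˢ Icc (-π) π) :=
    (continuous_fst.continuousOn).mul (hvc.comp he.continuousOn hmaps)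
  have hkB : IntegrableOn k B := (hkc.integrableOn_compact hKcomp).mono_set
    (prod_mono Ioo_subset_Icc_self Ioo_subset_Icc_self)
  -- Fubini
  have hkB' : Integrable k ((volume.restrict (Ioo (0:ℝ) r)).prod (volume.restrict (Ioo (-π) π))) := by
    rw [Measure.prod_restrict, ← Measure.volume_eq_prod]
    exact hkB
  have hfub : (∫ p in B, k p) = ∫ s in Ioo (0:ℝ) r, ∫ θ in Ioo (-π) π, k (s, θ) := by
    rw [hB, Measure.volume_eq_prod]
    refine setIntegral_prod k ?_
    rwa [← Measure.volume_eq_prod]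
  -- marginal integrability
  have hmar : IntegrableOn (fun s => ∫ θ in Ioo (-π) π, k (s, θ)) (Ioo (0:ℝ) r) :=
    hkB'.integral_prod_left
  have hlow : IntegrableOn (fun s : ℝ => 2 * π * c * s) (Ioo (0:ℝ) r) :=
    ((continuous_const.mul continuous_id).continuousOn.integrableOn_compact
      isCompact_Icc).mono_set Ioo_subset_Icc_self
  -- pointwise bound
  have hpt : ∀ s ∈ Ioo (0:ℝ) r, 2 * π * c * s ≤ ∫ θ in Ioo (-π) π, k (s, θ) := by
    intro s hsmem
    obtain ⟨hs0, hsr⟩ := hsmem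
    have hper : Function.Periodic (fun θ : ℝ => v ((s:ℂ) * Complex.exp (↑θ * Complex.I))) (2*π) := by
      intro θ
      have : Complex.exp (↑(θ + 2*π) * Complex.I) = Complex.exp (↑θ * Complex.I) := by
        push_cast
        rw [add_mul, Complex.exp_add, Complex.exp_two_pi_mul_I, mul_one]
      simp only [this]
    have hcm : ∀ θ : ℝ, circleMap 0 s θ = (s:ℂ) * Complex.exp (↑θ * Complex.I) := by
      intro θ; simp [circleMap]
    have hcirc := circle_mean f s hs0 (hf.mono (Metric.closedBall_subset_closedBall hsr.le))
    have heq : (∫ θ in Ioo (-π) π, k (s, θ))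
        = s * ∫ θ in (0:ℝ)..(2*π), v ((s:ℂ) * Complex.exp (↑θ * Complex.I)) := by
      calc (∫ θ in Ioo (-π) π, k (s, θ))
          = s * ∫ θ in Ioo (-π) π, v ((s:ℂ) * Complex.exp (↑θ * Complex.I)) := by
            simp only [hk]
            rw [integral_const_mul]
        _ = s * ∫ θ in (-π)..π, v ((s:ℂ) * Complex.exp (↑θ * Complex.I)) := by
            rw [intervalIntegral.integral_of_le (by linarith [pi_pos] : -π ≤ π),
              integral_Ioc_eq_integral_Ioo]
        _ = s * ∫ θ in (0:ℝ)..(2*π), v ((s:ℂ) * Complex.exp (↑θ * Complex.I)) := by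
            congr 1
            have := hper.intervalIntegral_add_eq (-π) 0
            rw [show -π + 2*π = π by ring, zero_add] at this
            exact this
    rw [heq]
    have : 2 * π * c ≤ ∫ θ in (0:ℝ)..(2*π), v ((s:ℂ) * Complex.exp (↑θ * Complex.I)) := by
      simpa only [hcm] using hcirc
    calc 2 * π * c * s = s * (2 * π * c) := by ring
      _ ≤ s * ∫ θ in (0:ℝ)..(2*π), v ((s:ℂ) * Complex.exp (↑θ * Complex.I)) :=
          mul_le_mul_of_nonneg_left this hs0.le
  -- conclude
  have hmono := setIntegral_mono_on hlow hmar measurableSet_Ioo hpt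
  have hid : (∫ s in Ioo (0:ℝ) r, 2 * π * c * s) = π * (c * r ^ 2) := by
    rw [integral_const_mul, ← integral_Ioc_eq_integral_Ioo,
      ← intervalIntegral.integral_of_le hr.le, integral_id]
    ring
  rw [step1, hfub]
  calc π * (c * r ^ 2) = ∫ s in Ioo (0:ℝ) r, 2 * π * c * s := hid.symm
    _ ≤ _ := hmono

lemma lball (f : ℂ → ℂ) (R : ℝ) (hR : 0 < R)
    (hf : ∀ w ∈ Metric.ball (0:ℂ) R, DifferentiableAt ℂ f w) :
    ENNReal.ofReal (π * (‖f 0‖ ^ 2 * R ^ 2)) ≤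
      ∫⁻ w in Metric.ball (0:ℂ) R, ENNReal.ofReal (‖f w‖ ^ 2) := by
  set c := ‖f 0‖ ^ 2 with hc
  have key : ∀ r : ℝ, 0 < r → r < R →
      ENNReal.ofReal (π * (c * r ^ 2)) ≤
        ∫⁻ w in Metric.ball (0:ℂ) R, ENNReal.ofReal (‖f w‖ ^ 2) := by
    intro r h0 hrR
    have hsub : Metric.closedBall (0:ℂ) r ⊆ Metric.ball (0:ℂ) R :=
      (Metric.closedBall_subset_ball hrR)
    have hd : DifferentiableOn ℂ f (Metric.closedBall 0 r) := fun w hw =>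
      (hf w (hsub hw)).differentiableWithinAt
    have hreal := ball_mean f r h0 hd
    have hvc : ContinuousOn (fun w => ‖f w‖ ^ 2) (Metric.closedBall 0 r) :=
      (continuous_norm.comp_continuousOn hd.continuousOn).pow 2
    have hInt : IntegrableOn (fun w => ‖f w‖ ^ 2) (Metric.ball (0:ℂ) r) :=
      (hvc.integrableOn_compact (isCompact_closedBall _ _)).mono_set
        Metric.ball_subset_closedBall
    calc ENNReal.ofReal (π * (c * r ^ 2))
        ≤ ENNReal.ofReal (∫ w in Metric.ball (0:ℂ) r, ‖f w‖ ^ 2) :=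
          ENNReal.ofReal_le_ofReal hreal
      _ = ∫⁻ w in Metric.ball (0:ℂ) r, ENNReal.ofReal (‖f w‖ ^ 2) :=
          ofReal_integral_eq_lintegral_ofReal hInt
            (ae_of_all _ fun w => by positivity)
      _ ≤ ∫⁻ w in Metric.ball (0:ℂ) R, ENNReal.ofReal (‖f w‖ ^ 2) :=
          lintegral_mono_set (Metric.ball_subset_ball hrR.le)
  have cont : Tendsto (fun r : ℝ => ENNReal.ofReal (π * (c * r ^ 2))) (nhdsWithin R (Iio R))
      (nhds (ENNReal.ofReal (π * (c * R ^ 2)))) := by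
    apply Tendsto.mono_left _ nhdsWithin_le_nhds
    exact (ENNReal.continuous_ofReal.comp (by continuity)).tendsto R
  refine le_of_tendsto cont ?_
  have h1 : ∀ᶠ r in nhdsWithin R (Iio R), 0 < r :=
    eventually_nhdsWithin_of_eventually_nhds (eventually_gt_nhds hR)
  filter_upwards [h1, self_mem_nhdsWithin] with r hr0 hrR
  exact key r hr0 hrR

lemma hartogs_open (Ω : Set ℂ) (hΩ : IsOpen Ω) (φ : ℂ → ℝ)
    (hφ : UpperSemicontinuousOn φ Ω) :
    IsOpen {p : ℂ × ℂ | p.1 ∈ Ω ∧ ‖p.2‖ ^ 2 < Real.exp (-φ p.1)} := by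
  rw [isOpen_iff_mem_nhds]
  rintro ⟨z, w⟩ ⟨hz, hw⟩
  set m : ℝ := (‖w‖ ^ 2 + Real.exp (-φ z)) / 2 with hm
  have hm0 : 0 < m := by positivity
  have hm1 : ‖w‖ ^ 2 < m := by simp only [hm]; nlinarith
  have hm2 : m < Real.exp (-φ z) := by simp only [hm]; nlinarith
  set a : ℝ := -Real.log m with ha
  have haz : φ z < a := by
    have h := (Real.log_lt_iff_lt_exp hm0).2 hm2
    simp only [ha]; linarith
  have hea : ‖w‖ ^ 2 < Real.exp (-a) := by
    rw [ha, neg_neg, Real.exp_log hm0]; exact hm1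
  have husc := hφ z hz a haz
  rw [nhdsWithin_eq_nhds.2 (hΩ.mem_nhds hz)] at husc
  have hU : ∀ᶠ z' in nhds z, φ z' < a ∧ z' ∈ Ω := husc.and (hΩ.mem_nhds hz)
  have hV : {w' : ℂ | ‖w'‖ ^ 2 < Real.exp (-a)} ∈ nhds w := by
    have hopen : IsOpen {w' : ℂ | ‖w'‖ ^ 2 < Real.exp (-a)} :=
      isOpen_lt (by continuity) continuous_const
    exact hopen.mem_nhds hea
  refine mem_of_superset (prod_mem_nhds hU hV) ?_
  rintro ⟨z', w'⟩ ⟨⟨hz'a, hz'Ω⟩, hw'⟩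
  refine ⟨hz'Ω, lt_trans hw' (Real.exp_lt_exp.2 (by linarith))⟩

/-- For an open `Ω ⊆ ℂ`, an upper semicontinuous `φ : Ω → ℝ`, the
Hartogs domain `Ω̃ = {(z,w) : z ∈ Ω, |w|² < e^{-φ(z)}}`, and `F` holomorphic on
`Ω̃`, one has `π ∫_Ω |F(z,0)|² e^{-φ(z)} dλ(z) ≤ ∫_{Ω̃} |F|² dλ` in `[0,∞]`. -/
theorem hartogs_fiber_mean_value
    (Ω : Set ℂ) (hΩ : IsOpen Ω)
    (φ : ℂ → ℝ) (hφ : UpperSemicontinuousOn φ Ω)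
    (F : ℂ × ℂ → ℂ)
    (hF : ∀ p ∈ {p : ℂ × ℂ | p.1 ∈ Ω ∧ ‖p.2‖ ^ 2 < Real.exp (-φ p.1)},
      DifferentiableAt ℂ F p) :
    ENNReal.ofReal π *
        ∫⁻ z in Ω, ENNReal.ofReal (‖F (z, 0)‖ ^ 2 * Real.exp (-φ z))
      ≤ ∫⁻ p in {p : ℂ × ℂ | p.1 ∈ Ω ∧ ‖p.2‖ ^ 2 < Real.exp (-φ p.1)},
          ENNReal.ofReal (‖F p‖ ^ 2) := by
  set S : Set (ℂ × ℂ) := {p : ℂ × ℂ | p.1 ∈ Ω ∧ ‖p.2‖ ^ 2 < Real.exp (-φ p.1)}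
    with hSdef
  have hS : IsOpen S := hartogs_open Ω hΩ φ hφ
  set g : ℂ × ℂ → ENNReal := fun p => ENNReal.ofReal (‖F p‖ ^ 2) with hg
  -- measurability of indicator
  have hFc : ContinuousOn F S := fun p hp => (hF p hp).continuousAt.continuousWithinAt
  have hgS : AEMeasurable g (volume.restrict S) :=
    (ENNReal.continuous_ofReal.comp_continuousOn
      ((continuous_norm.comp_continuousOn hFc).pow 2)).aemeasurable hS.measurableSet
  have hind : AEMeasurable (S.indicator g) ((volume : Measure ℂ).prod volume) := by
    rw [← Measure.volume_eq_prod]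
    exact (aemeasurable_indicator_iff hS.measurableSet).2 hgS
  -- rewrite RHS as iterated integral
  have hRHS : (∫⁻ p in S, g p) = ∫⁻ z, ∫⁻ w, S.indicator g (z, w) := by
    rw [← lintegral_indicator hS.measurableSet g, Measure.volume_eq_prod,
      lintegral_prod _ hind]
  -- per-fiber bound
  have hfiber : ∀ z ∈ Ω,
      ENNReal.ofReal π * ENNReal.ofReal (‖F (z, 0)‖ ^ 2 * Real.exp (-φ z))
        ≤ ∫⁻ w, S.indicator g (z, w) := by
    intro z hz
    set r : ℝ := Real.exp (-φ z / 2) with hrdef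
    have hr : 0 < r := Real.exp_pos _
    have hrsq : r ^ 2 = Real.exp (-φ z) := by
      rw [hrdef, pow_two, ← Real.exp_add]
      congr 1; ring
    have hfib : ∀ w : ℂ, (z, w) ∈ S ↔ w ∈ Metric.ball (0:ℂ) r := by
      intro w
      rw [mem_ball_zero_iff]
      constructor
      · rintro ⟨-, h⟩
        rw [← hrsq] at h
        exact lt_of_pow_lt_pow_left₀ 2 hr.le h
      · intro h
        exact ⟨hz, by rw [← hrsq]; exact pow_lt_pow_left₀ h (norm_nonneg w) two_ne_zero⟩
    have heq : (∫⁻ w, S.indicator g (z, w)) =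
        ∫⁻ w in Metric.ball (0:ℂ) r, ENNReal.ofReal (‖F (z, w)‖ ^ 2) := by
      rw [← lintegral_indicator measurableSet_ball _]
      apply lintegral_congr
      intro w
      by_cases hw : w ∈ Metric.ball (0:ℂ) r
      · rw [indicator_of_mem hw, indicator_of_mem ((hfib w).2 hw)]
      · rw [indicator_of_notMem hw, indicator_of_notMem (fun h => hw ((hfib w).1 h))]
    rw [heq]
    have hdiff : ∀ w ∈ Metric.ball (0:ℂ) r, DifferentiableAt ℂ (fun w => F (z, w)) w := by
      intro w hw
      exact (hF (z, w) ((hfib w).2 hw)).comp w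
        ((differentiableAt_const z).prodMk differentiableAt_id)
    have := lball (fun w => F (z, w)) r hr hdiff
    refine le_trans ?_ this
    rw [← hrsq, ← ENNReal.ofReal_mul pi_pos.le]
  -- assemble
  calc ENNReal.ofReal π *
        ∫⁻ z in Ω, ENNReal.ofReal (‖F (z, 0)‖ ^ 2 * Real.exp (-φ z))
      = ∫⁻ z in Ω, ENNReal.ofReal π *
          ENNReal.ofReal (‖F (z, 0)‖ ^ 2 * Real.exp (-φ z)) :=
        (lintegral_const_mul' _ _ ENNReal.ofReal_ne_top).symm
    _ ≤ ∫⁻ z in Ω, ∫⁻ w, S.indicator g (z, w) := by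
        refine lintegral_mono_ae ?_
        rw [ae_restrict_iff' hΩ.measurableSet]
        exact ae_of_all _ hfiber
    _ ≤ ∫⁻ z, ∫⁻ w, S.indicator g (z, w) := setLIntegral_le_lintegral _ _
    _ = ∫⁻ p in S, g p := hRHS.symm
end

section
/- Let u : (-∞,0) → ℝ be a convex, continuous, strictly increasing bijection from (-∞,0) onto ℝ, with inverse u⁻¹ : ℝ → (-∞,0), and define the radial weight φ(z) = u(log|z|²) on the punctured unit disc. Then for every function f : ℂ → ℂ holomorphic on the open unit disc Δ with f(0) = 1, one has, as an inequality of Lebesgue integrals with values in [0,+∞], ∫_{Δ} |f(z)|² e^{-φ(z)} dλ(z) ≥ ∫_{|w|<1} e^{u⁻¹(-log|w|²)} dλ(w). That is, the weighted L²-norm of any holomorphic extension of the value 1 at the origin is bounded below by the quantity ∫_{|w|<1} e^{-ψ(w)} dλ(w), where ψ(w) = -u⁻¹(-log|w|²). -/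
open MeasureTheory Set Real
open scoped ENNReal NNReal Topology

theorem my_lintegral_polar (g : ℝ × ℝ → ℝ≥0∞) :
    ∫⁻ p in polarCoord.target, ENNReal.ofReal p.1 * g (polarCoord.symm p) = ∫⁻ p, g p := by
  set B : ℝ × ℝ → ℝ × ℝ →L[ℝ] ℝ × ℝ := fun p =>
    LinearMap.toContinuousLinearMap (Matrix.toLin (Module.Basis.finTwoProd ℝ) (Module.Basis.finTwoProd ℝ)
      !![Real.cos p.2, -p.1 * Real.sin p.2; Real.sin p.2, p.1 * Real.cos p.2])
  have A : ∀ p ∈ polarCoord.target, HasFDerivWithinAt polarCoord.symm (B p) polarCoord.target p :=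
    fun p _ => (hasFDerivAt_polarCoord_symm p).hasFDerivWithinAt
  have B_det : ∀ p, (B p).det = p.1 := by
    intro p
    conv_rhs => rw [← one_mul p.1, ← cos_sq_add_sin_sq p.2]
    simp only [B, neg_mul, LinearMap.det_toContinuousLinearMap, LinearMap.det_toLin,
      Matrix.det_fin_two_of, sub_neg_eq_add]
    ring
  symm
  calc
    ∫⁻ p, g p = ∫⁻ p in polarCoord.source, g p := by
      rw [← setLIntegral_univ]
      exact (setLIntegral_congr polarCoord_source_ae_eq_univ.symm)
    _ = ∫⁻ p in polarCoord.symm '' polarCoord.target, g p := by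
      rw [polarCoord.symm_image_target_eq_source]
    _ = ∫⁻ p in polarCoord.target, ENNReal.ofReal |(B p).det| * g (polarCoord.symm p) := by
      exact lintegral_image_eq_lintegral_abs_det_fderiv_mul volume
        polarCoord.open_target.measurableSet A (polarCoord.symm.injOn) g
    _ = ∫⁻ p in polarCoord.target, ENNReal.ofReal p.1 * g (polarCoord.symm p) := by
      refine setLIntegral_congr_fun polarCoord.open_target.measurableSet
        (fun p hp => ?_)
      rw [B_det, abs_of_pos hp.1]

theorem my_lintegral_polar_complex (g : ℂ → ℝ≥0∞) :
    ∫⁻ p in polarCoord.target, ENNReal.ofReal p.1 * g (Complex.polarCoord.symm p) = ∫⁻ z, g z := by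
  rw [← (Complex.volume_preserving_equiv_real_prod.symm).lintegral_comp_emb
    Complex.measurableEquivRealProd.symm.measurableEmbedding, ← my_lintegral_polar]
  rfl


lemma circle_cauchy (f : ℂ → ℂ) (hf : ∀ z ∈ Metric.ball (0 : ℂ) 1, DifferentiableAt ℂ f z)
    (hf0 : f 0 = 1) {s : ℝ} (h0 : 0 < s) (h1 : s < 1) :
    2 * π ≤ ∫ θ in (0:ℝ)..(2*π), ‖f (circleMap 0 s θ)‖ ^ 2 := by
  have hball : Metric.closedBall (0:ℂ) s ⊆ Metric.ball 0 1 := Metric.closedBall_subset_ball h1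
  have hg : DiffContOnCl ℂ (fun z => f z ^ 2) (Metric.ball 0 s) := by
    constructor
    · intro z hz
      exact ((hf z (Metric.ball_subset_ball h1.le hz)).pow 2).differentiableWithinAt
    · rw [closure_ball (0:ℂ) h0.ne']
      exact fun z hz => ((hf z (hball hz)).pow 2).continuousAt.continuousWithinAt
  have key := hg.circleIntegral_sub_inv_smul (w := 0) (Metric.mem_ball_self h0)
  have hnorm : ‖(2 * ↑π * Complex.I : ℂ) • ((f 0) ^ 2)‖ = 2 * π := by
    simp [hf0, norm_smul, Complex.norm_two, abs_of_pos pi_pos]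
  have hb : ‖∮ z in C(0, s), (z - 0)⁻¹ • (f z ^ 2)‖
      ≤ ∫ θ in (0:ℝ)..(2*π), ‖f (circleMap 0 s θ)‖ ^ 2 := by
    rw [circleIntegral]
    refine (intervalIntegral.norm_integral_le_integral_norm (by positivity)).trans_eq ?_
    refine intervalIntegral.integral_congr fun θ _ => ?_
    have hne : circleMap 0 s θ ≠ 0 := circleMap_ne_center h0.ne'
    rw [deriv_circleMap]
    simp only [smul_eq_mul, sub_zero, norm_mul, norm_inv, norm_div, norm_one,
      Complex.norm_I, norm_circleMap_zero, abs_of_pos h0, norm_pow]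
    field_simp
  calc 2 * π = ‖(2 * ↑π * Complex.I : ℂ) • ((f 0) ^ 2)‖ := hnorm.symm
  _ = ‖∮ z in C(0, s), (z - 0)⁻¹ • (f z ^ 2)‖ := by rw [key]
  _ ≤ _ := hb

lemma circle_lb (f : ℂ → ℂ) (hf : ∀ z ∈ Metric.ball (0 : ℂ) 1, DifferentiableAt ℂ f z)
    (hf0 : f 0 = 1) {s : ℝ} (h0 : 0 < s) (h1 : s < 1) :
    ENNReal.ofReal (2 * π)
      ≤ ∫⁻ θ in Ioo (-π) π, ENNReal.ofReal (‖f (circleMap 0 s θ)‖ ^ 2) := by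
  have hmem : ∀ θ : ℝ, circleMap 0 s θ ∈ Metric.ball (0:ℂ) 1 := by
    intro θ
    simp [Metric.mem_ball, Complex.dist_eq, norm_circleMap_zero, abs_of_pos h0, h1]
  have hcont : Continuous fun θ => ‖f (circleMap 0 s θ)‖ ^ 2 := by
    refine Continuous.pow ?_ 2
    refine continuous_norm.comp ?_
    refine continuous_iff_continuousAt.2 fun θ => ?_
    exact ((hf _ (hmem θ)).continuousAt).comp (continuous_circleMap 0 s).continuousAt
  have hper : Function.Periodic (fun θ => ‖f (circleMap 0 s θ)‖ ^ 2) (2*π) :=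
    (periodic_circleMap 0 s).comp fun z => ‖f z‖ ^ 2
  have hshift : (∫ θ in (-π)..(π), ‖f (circleMap 0 s θ)‖ ^ 2)
      = ∫ θ in (0:ℝ)..(2*π), ‖f (circleMap 0 s θ)‖ ^ 2 := by
    have h := hper.intervalIntegral_add_eq (-π) 0
    rw [zero_add] at h
    have h2 : -π + 2*π = π := by ring
    rw [h2] at h
    exact h
  have h1' : 2 * π ≤ ∫ θ in (-π)..(π), ‖f (circleMap 0 s θ)‖ ^ 2 := by
    rw [hshift]; exact circle_cauchy f hf hf0 h0 h1
  have hioc : (∫ θ in (-π)..(π), ‖f (circleMap 0 s θ)‖ ^ 2)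
      = ∫ θ in Ioc (-π) π, ‖f (circleMap 0 s θ)‖ ^ 2 :=
    intervalIntegral.integral_of_le (by linarith [pi_pos])
  have hint : IntegrableOn (fun θ => ‖f (circleMap 0 s θ)‖ ^ 2) (Ioc (-π) π) :=
    hcont.integrableOn_Ioc
  calc ENNReal.ofReal (2 * π)
      ≤ ENNReal.ofReal (∫ θ in Ioc (-π) π, ‖f (circleMap 0 s θ)‖ ^ 2) := by
        exact ENNReal.ofReal_le_ofReal (hioc ▸ h1')
  _ = ∫⁻ θ in Ioc (-π) π, ENNReal.ofReal (‖f (circleMap 0 s θ)‖ ^ 2) := by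
        exact ofReal_integral_eq_lintegral_ofReal hint (Filter.Eventually.of_forall fun θ => by positivity)
  _ = _ := by
        exact (setLIntegral_congr Ioo_ae_eq_Ioc).symm


lemma area_lb (f : ℂ → ℂ) (hf : ∀ z ∈ Metric.ball (0 : ℂ) 1, DifferentiableAt ℂ f z)
    (hf0 : f 0 = 1) {r : ℝ} (h0 : 0 < r) (h1 : r < 1) :
    volume (Metric.ball (0:ℂ) r)
      ≤ ∫⁻ z in Metric.ball (0:ℂ) r, ENNReal.ofReal (‖f z‖ ^ 2) := by
  set g : ℂ → ℝ≥0∞ :=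
    (Metric.ball (0:ℂ) r).indicator (fun z => ENNReal.ofReal (‖f z‖ ^ 2)) with hg
  classical
  have hcontOn : ContinuousOn (fun z => ENNReal.ofReal (‖f z‖ ^ 2))
      (Metric.ball (0:ℂ) r) := by
    intro z hz
    have hz1 : z ∈ Metric.ball (0:ℂ) 1 := Metric.ball_subset_ball h1.le hz
    exact (ENNReal.continuous_ofReal.continuousAt.comp
      (((hf z hz1).continuousAt.norm.pow 2).congr (by
        filter_upwards with w
        simp))).continuousWithinAt
  have hgmeas : Measurable g := by
    rw [hg, ← Set.piecewise_eq_indicator]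
    exact ContinuousOn.measurable_piecewise hcontOn continuousOn_const
      Metric.isOpen_ball.measurableSet
  have hsymm_cont : Continuous fun p : ℝ × ℝ => Complex.polarCoord.symm p := by
    have : (fun p : ℝ×ℝ => Complex.polarCoord.symm p)
        = fun p => (p.1 : ℂ) * (Real.cos p.2 + Real.sin p.2 * Complex.I) := by
      funext p; exact Complex.polarCoord_symm_apply p
    rw [this]; fun_prop
  have hFmeas : Measurable fun p : ℝ × ℝ => ENNReal.ofReal p.1 * g (Complex.polarCoord.symm p) :=
    (measurable_fst.ennreal_ofReal).mul (hgmeas.comp hsymm_cont.measurable)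
  have step1 : ∫⁻ z in Metric.ball (0:ℂ) r, ENNReal.ofReal (‖f z‖ ^ 2)
      = ∫⁻ p in polarCoord.target, ENNReal.ofReal p.1 * g (Complex.polarCoord.symm p) := by
    rw [my_lintegral_polar_complex g, hg, lintegral_indicator Metric.isOpen_ball.measurableSet]
  rw [step1]
  have hsub : (Ioo (0:ℝ) r ×ˢ Ioo (-π) π) ⊆ polarCoord.target := by
    rintro ⟨x, θ⟩ ⟨hx, hθ⟩
    exact ⟨hx.1, hθ⟩
  refine le_trans ?_ (lintegral_mono_set hsub)
  have hprod : (volume : Measure (ℝ×ℝ)).restrict (Ioo (0:ℝ) r ×ˢ Ioo (-π) π)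
      = (volume.restrict (Ioo (0:ℝ) r)).prod (volume.restrict (Ioo (-π) π)) := by
    rw [Measure.prod_restrict, ← Measure.volume_eq_prod]
  have tonelli : ∫⁻ p in Ioo (0:ℝ) r ×ˢ Ioo (-π) π,
        ENNReal.ofReal p.1 * g (Complex.polarCoord.symm p)
      = ∫⁻ x in Ioo (0:ℝ) r, ∫⁻ θ in Ioo (-π) π,
          ENNReal.ofReal x * g (Complex.polarCoord.symm (x, θ)) := by
    rw [hprod, lintegral_prod _ hFmeas.aemeasurable]
  rw [tonelli]
  have inner : ∀ x ∈ Ioo (0:ℝ) r,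
      ENNReal.ofReal x * ENNReal.ofReal (2 * π)
        ≤ ∫⁻ θ in Ioo (-π) π, ENNReal.ofReal x * g (Complex.polarCoord.symm (x, θ)) := by
    intro x hx
    have hgx : ∀ θ : ℝ, g (Complex.polarCoord.symm (x, θ))
        = ENNReal.ofReal (‖f (circleMap 0 x θ)‖ ^ 2) := by
      intro θ
      have hcm : Complex.polarCoord.symm (x, θ) = circleMap 0 x θ := by
        simp [circleMap, Complex.exp_mul_I, Complex.polarCoord_symm_apply]
      have hmem : circleMap 0 x θ ∈ Metric.ball (0:ℂ) r := by
        simp [Metric.mem_ball, Complex.dist_eq, norm_circleMap_zero, abs_of_pos hx.1, hx.2]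
      rw [hcm, hg, Set.indicator_of_mem hmem]
    calc ENNReal.ofReal x * ENNReal.ofReal (2 * π)
        ≤ ENNReal.ofReal x * ∫⁻ θ in Ioo (-π) π,
            ENNReal.ofReal (‖f (circleMap 0 x θ)‖ ^ 2) := by
          exact mul_le_mul_right (circle_lb f hf hf0 hx.1 (hx.2.trans h1)) _
    _ = ∫⁻ θ in Ioo (-π) π, ENNReal.ofReal x * g (Complex.polarCoord.symm (x, θ)) := by
          rw [lintegral_const_mul' _ _ ENNReal.ofReal_ne_top]
          congr 1
          exact lintegral_congr fun θ => (hgx θ).symm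
  refine le_trans ?_ (setLIntegral_mono'  measurableSet_Ioo inner)
  have hid : ∫⁻ x in Ioo (0:ℝ) r, ENNReal.ofReal x = ENNReal.ofReal (r^2/2) := by
    rw [← ofReal_integral_eq_lintegral_ofReal]
    · congr 1
      rw [← integral_Ioc_eq_integral_Ioo, ← intervalIntegral.integral_of_le h0.le,
        integral_id]
      ring
    · exact (continuous_id.integrableOn_Icc).mono_set Ioo_subset_Icc_self
    · filter_upwards [ae_restrict_mem measurableSet_Ioo] with x hx
      exact hx.1.le
  rw [lintegral_mul_const' _ _ ENNReal.ofReal_ne_top, hid, Complex.volume_ball,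
    ← ENNReal.ofReal_mul (by positivity)]
  have hpi : (NNReal.pi : ℝ≥0∞) = ENNReal.ofReal π := by
    rw [← NNReal.coe_real_pi, ENNReal.ofReal_coe_nnreal]
  rw [hpi, ← ENNReal.ofReal_pow h0.le, ← ENNReal.ofReal_mul (by positivity)]
  exact ENNReal.ofReal_le_ofReal (by ring_nf; exact le_refl _)


lemma vol_abs_sq_lt (c : ℝ) :
    volume {z : ℂ | ‖z‖ ^ 2 < c} = ENNReal.ofReal c * ENNReal.ofReal π := by
  rcases le_or_gt c 0 with hc | hc
  · have he : {z : ℂ | ‖z‖ ^ 2 < c} = ∅ :=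
      eq_empty_of_forall_notMem fun z hz => absurd (lt_of_le_of_lt (by positivity) hz) hc.not_gt
    rw [he]
    simp [ENNReal.ofReal_eq_zero.2 hc]
  · have he : {z : ℂ | ‖z‖ ^ 2 < c} = Metric.ball (0:ℂ) (Real.sqrt c) := by
      ext z
      simp only [mem_setOf_eq, Metric.mem_ball, Complex.dist_eq, sub_zero]
      rw [Real.lt_sqrt (norm_nonneg z)]
    rw [he, Complex.volume_ball, ← ENNReal.ofReal_pow (Real.sqrt_nonneg c), Real.sq_sqrt hc.le,
      ← NNReal.coe_real_pi, ENNReal.ofReal_coe_nnreal]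

-- Step I: comparison of the two base integrals
lemma step_one (u v : ℝ → ℝ)
    (hmono : StrictMonoOn u (Set.Iio (0 : ℝ)))
    (hv_mem : ∀ s : ℝ, v s ∈ Set.Iio (0 : ℝ))
    (hv_right : ∀ s : ℝ, u (v s) = s) :
    ∫⁻ w in Metric.ball (0 : ℂ) 1,
        ENNReal.ofReal (Real.exp (v (-(Real.log (‖w‖ ^ 2)))))
      ≤ ∫⁻ z in Metric.ball (0 : ℂ) 1,
          ENNReal.ofReal (Real.exp (-(u (Real.log (‖z‖ ^ 2))))) := by
  have hvmono : StrictMono v := by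
    intro a b hab
    by_contra h
    push_neg at h
    have := hmono.monotoneOn (hv_mem b) (hv_mem a) h
    rw [hv_right, hv_right] at this
    exact absurd hab this.not_gt
  have hvmeas : Measurable v := hvmono.monotone.measurable
  set U := Metric.ball (0:ℂ) 1 with hU
  have hUmeas : MeasurableSet U := Metric.isOpen_ball.measurableSet
  have hmemU : ∀ w : ℂ, w ∈ U ↔ ‖w‖ < 1 := by
    intro w; rw [hU, Metric.mem_ball, Complex.dist_eq, sub_zero]
  have h0null : volume ({0} : Set ℂ) = 0 := measure_singleton 0
  set S : Set (ℂ × ℂ) := {p | ‖p.1‖ < 1 ∧ p.1 ≠ 0 ∧ p.2 ≠ 0 ∧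
      Real.log (‖p.2‖ ^ 2) < v (-(Real.log (‖p.1‖ ^ 2)))} with hSdef
  have hS : MeasurableSet S := by
    have h1 : MeasurableSet {p : ℂ × ℂ | ‖p.1‖ < 1} :=
      measurableSet_lt (continuous_norm.comp continuous_fst).measurable measurable_const
    have h2 : MeasurableSet {p : ℂ × ℂ | p.1 ≠ 0} :=
      (measurableSet_singleton (0:ℂ)).compl.preimage measurable_fst
    have h3 : MeasurableSet {p : ℂ × ℂ | p.2 ≠ 0} :=
      (measurableSet_singleton (0:ℂ)).compl.preimage measurable_snd
    have h4 : MeasurableSet {p : ℂ × ℂ |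
        Real.log (‖p.2‖ ^ 2) < v (-(Real.log (‖p.1‖ ^ 2)))} := by
      refine measurableSet_lt ?_ ?_
      · exact (Real.measurable_log.comp
          ((continuous_norm.comp continuous_snd).measurable.pow_const 2))
      · exact hvmeas.comp
          ((Real.measurable_log.comp
            ((continuous_norm.comp continuous_fst).measurable.pow_const 2)).neg)
    exact h1.inter (h2.inter (h3.inter h4))
  -- the w-slices
  have slice1 : ∀ w : ℂ, volume (Prod.mk w ⁻¹' S)
      = (U \ {0}).indicator
          (fun w => ENNReal.ofReal (Real.exp (v (-(Real.log (‖w‖ ^ 2)))))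
            * ENNReal.ofReal π) w := by
    intro w
    by_cases hw : w ∈ U \ {0}
    · have hw1 := hw.1
      have hw0 := hw.2
      rw [Set.indicator_of_mem hw]
      have hw1' : ‖w‖ < 1 := (hmemU w).1 hw1
      have hset : Prod.mk w ⁻¹' S
          = {z : ℂ | ‖z‖ ^ 2 < Real.exp (v (-(Real.log (‖w‖ ^ 2))))} \ {0} := by
        ext z
        simp only [hSdef, mem_preimage, mem_setOf_eq, mem_diff, mem_singleton_iff]
        have hwne : w ≠ 0 := by simpa using hw0
        constructor
        · rintro ⟨-, -, hz0, hlt⟩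
          have hzpos : 0 < ‖z‖ ^ 2 := by
            have := norm_pos_iff.2 hz0
            positivity
          exact ⟨(Real.log_lt_iff_lt_exp hzpos).1 hlt, hz0⟩
        · rintro ⟨hlt, hz0⟩
          have hzpos : 0 < ‖z‖ ^ 2 := by
            have := norm_pos_iff.2 hz0; positivity
          exact ⟨hw1', hwne, hz0, (Real.log_lt_iff_lt_exp hzpos).2 hlt⟩
      rw [hset, measure_diff_null h0null, vol_abs_sq_lt]
    · have hset : Prod.mk w ⁻¹' S = ∅ := by
        ext z
        simp only [hSdef, mem_preimage, mem_setOf_eq, mem_empty_iff_false, iff_false, not_and]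
        intro h1 h2
        exact absurd ⟨(hmemU w).2 h1, h2⟩ hw
      rw [hset, Set.indicator_of_notMem hw]
      simp
  -- the z-slices
  have slice2 : ∀ z : ℂ, volume ((fun w => (w, z)) ⁻¹' S)
      ≤ (U \ {0}).indicator
          (fun z => ENNReal.ofReal (Real.exp (-(u (Real.log (‖z‖ ^ 2)))))
            * ENNReal.ofReal π) z := by
    intro z
    by_cases hz : z ∈ U \ {0}
    · have hz1 := hz.1
      have hz0 := hz.2
      rw [Set.indicator_of_mem hz]
      have hz0' : z ≠ 0 := by simpa using hz0
      have hz1' : ‖z‖ < 1 := (hmemU z).1 hz1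
      have hzpos : 0 < ‖z‖ ^ 2 := by have := norm_pos_iff.2 hz0'; positivity
      have hzlt1 : ‖z‖ ^ 2 < 1 := by
        have h := norm_nonneg z
        nlinarith
      have hzlog : Real.log (‖z‖ ^ 2) ∈ Set.Iio (0:ℝ) := Real.log_neg hzpos hzlt1
      have hsub : ((fun w => (w, z)) ⁻¹' S)
          ⊆ {w : ℂ | ‖w‖ ^ 2 < Real.exp (-(u (Real.log (‖z‖ ^ 2))))} := by
        rintro w ⟨hw1, hw0, -, hlt⟩
        have hw0' : w ≠ 0 := hw0
        have hwpos : 0 < ‖w‖ ^ 2 := by have := norm_pos_iff.2 hw0'; positivity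
        have hwlt1 : ‖w‖ ^ 2 < 1 := by
          have h := norm_nonneg w
          nlinarith
        have hwlog : -(Real.log (‖w‖ ^ 2)) ∈ Set.Ioi (0:ℝ) := by
          have := Real.log_neg hwpos hwlt1; simpa using this
        -- from hlt : log |z|² < v (-(log |w|²)) deduce u (log |z|²) < -(log |w|²)
        have key : u (Real.log (‖z‖ ^ 2)) < -(Real.log (‖w‖ ^ 2)) := by
          have := hmono hzlog (hv_mem (-(Real.log (‖w‖ ^ 2)))) hlt
          rwa [hv_right] at this
        have : Real.log (‖w‖ ^ 2) < -(u (Real.log (‖z‖ ^ 2))) := by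
          linarith
        exact (Real.log_lt_iff_lt_exp hwpos).1 this
      calc volume ((fun w => (w, z)) ⁻¹' S)
          ≤ volume {w : ℂ | ‖w‖ ^ 2
              < Real.exp (-(u (Real.log (‖z‖ ^ 2))))} := measure_mono hsub
      _ = _ := vol_abs_sq_lt _
    · have hset : ((fun w => (w, z)) ⁻¹' S) = ∅ := by
        ext w
        simp only [hSdef, mem_preimage, mem_setOf_eq, mem_empty_iff_false, iff_false, not_and]
        intro hw1 hw0 hz0
        -- z ∉ U \ {0}; z ≠ 0 forced, so |z| ≥ 1, so log |z|² ≥ 0 > v (...)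
        have hz1 : ¬ (‖z‖ < 1) := by
          intro hlt
          exact hz ⟨(hmemU z).2 hlt, by simpa using hz0⟩
        push_neg at hz1
        have hzlog : 0 ≤ Real.log (‖z‖ ^ 2) := by
          apply Real.log_nonneg
          nlinarith
        have := hv_mem (-(Real.log (‖w‖ ^ 2)))
        simp only [Set.mem_Iio] at this
        intro hlt
        linarith
      rw [hset]
      simp
  -- assemble
  rw [← ENNReal.mul_le_mul_iff_left (c := ENNReal.ofReal π)
    (by simp [Real.pi_pos]) ENNReal.ofReal_ne_top]
  have hdiffmeas : MeasurableSet (U \ ({0} : Set ℂ)) :=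
    hUmeas.diff (measurableSet_singleton 0)
  have hUae : (volume : Measure ℂ).restrict (U \ {0}) = volume.restrict U :=
    Measure.restrict_congr_set (diff_null_ae_eq_self h0null)
  calc (∫⁻ w in U, ENNReal.ofReal (Real.exp (v (-(Real.log (‖w‖ ^ 2))))))
        * ENNReal.ofReal π
      = ∫⁻ w in U, ENNReal.ofReal (Real.exp (v (-(Real.log (‖w‖ ^ 2)))))
          * ENNReal.ofReal π := (lintegral_mul_const' _ _ ENNReal.ofReal_ne_top).symm
  _ = ∫⁻ w in U \ {0}, ENNReal.ofReal (Real.exp (v (-(Real.log (‖w‖ ^ 2)))))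
          * ENNReal.ofReal π := by rw [hUae]
  _ = ∫⁻ w, (U \ {0}).indicator
          (fun w => ENNReal.ofReal (Real.exp (v (-(Real.log (‖w‖ ^ 2)))))
            * ENNReal.ofReal π) w := (lintegral_indicator hdiffmeas _).symm
  _ = ∫⁻ w, volume (Prod.mk w ⁻¹' S) := by
        exact lintegral_congr fun w => (slice1 w).symm
  _ = (volume.prod volume) S := (Measure.prod_apply hS).symm
  _ = ∫⁻ z, volume ((fun w => (w, z)) ⁻¹' S) := Measure.prod_apply_symm hS
  _ ≤ ∫⁻ z, (U \ {0}).indicator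
          (fun z => ENNReal.ofReal (Real.exp (-(u (Real.log (‖z‖ ^ 2)))))
            * ENNReal.ofReal π) z := lintegral_mono slice2
  _ = ∫⁻ z in U \ {0}, ENNReal.ofReal (Real.exp (-(u (Real.log (‖z‖ ^ 2)))))
          * ENNReal.ofReal π := lintegral_indicator hdiffmeas _
  _ = ∫⁻ z in U, ENNReal.ofReal (Real.exp (-(u (Real.log (‖z‖ ^ 2)))))
          * ENNReal.ofReal π := by rw [hUae]
  _ = (∫⁻ z in U, ENNReal.ofReal (Real.exp (-(u (Real.log (‖z‖ ^ 2))))))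
        * ENNReal.ofReal π := lintegral_mul_const' _ _ ENNReal.ofReal_ne_top


lemma step_two (u v : ℝ → ℝ)
    (hmono : StrictMonoOn u (Set.Iio (0 : ℝ)))
    (hv_mem : ∀ s : ℝ, v s ∈ Set.Iio (0 : ℝ))
    (hv_right : ∀ s : ℝ, u (v s) = s)
    (f : ℂ → ℂ) (hf : ∀ z ∈ Metric.ball (0 : ℂ) 1, DifferentiableAt ℂ f z)
    (hf0 : f 0 = 1) :
    ∫⁻ z in Metric.ball (0 : ℂ) 1,
        ENNReal.ofReal (Real.exp (-(u (Real.log (‖z‖ ^ 2)))))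
      ≤ ∫⁻ z in Metric.ball (0 : ℂ) 1,
          ENNReal.ofReal (‖f z‖ ^ 2 *
            Real.exp (-(u (Real.log (‖z‖ ^ 2))))) := by
  classical
  have hvmono : StrictMono v := by
    intro a b hab
    by_contra h
    push_neg at h
    have := hmono.monotoneOn (hv_mem b) (hv_mem a) h
    rw [hv_right, hv_right] at this
    exact absurd hab this.not_gt
  have hvmeas : Measurable v := hvmono.monotone.measurable
  set U := Metric.ball (0:ℂ) 1 with hU
  have hUmeas : MeasurableSet U := Metric.isOpen_ball.measurableSet
  have hmemU : ∀ w : ℂ, w ∈ U ↔ ‖w‖ < 1 := by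
    intro w; rw [hU, Metric.mem_ball, Complex.dist_eq, sub_zero]
  have h0null : volume ({0} : Set ℂ) = 0 := measure_singleton 0
  have hdiffmeas : MeasurableSet (U \ ({0} : Set ℂ)) := hUmeas.diff (measurableSet_singleton 0)
  have hUae : (volume : Measure ℂ).restrict (U \ {0}) = volume.restrict U :=
    Measure.restrict_congr_set (diff_null_ae_eq_self h0null)
  set W : ℂ → ℝ≥0∞ := fun z => ENNReal.ofReal (Real.exp (-(u (Real.log (‖z‖ ^ 2)))))
    with hW
  set F : ℂ → ℝ≥0∞ := U.indicator (fun z => ENNReal.ofReal (‖f z‖ ^ 2)) with hF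
  have hFmeas : Measurable F := by
    rw [hF, ← Set.piecewise_eq_indicator]
    refine ContinuousOn.measurable_piecewise ?_ continuousOn_const hUmeas
    intro z hz
    exact (ENNReal.continuous_ofReal.continuousAt.comp
      (((hf z hz).continuousAt.norm.pow 2).congr (by
        filter_upwards with w
        simp))).continuousWithinAt
  have hFne : ∀ z, F z ≠ ⊤ := by
    intro z
    rw [hF]
    by_cases hz : z ∈ U
    · rw [Set.indicator_of_mem hz]; exact ENNReal.ofReal_ne_top
    · rw [Set.indicator_of_notMem hz]; exact ENNReal.zero_ne_top
  set T : Set (ℂ × ℝ) := {q | ‖q.1‖ < 1 ∧ q.1 ≠ 0 ∧ 0 < q.2 ∧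
      Real.log (‖q.1‖ ^ 2) < v (-(Real.log q.2))} with hTdef
  have hT : MeasurableSet T := by
    have h1 : MeasurableSet {q : ℂ × ℝ | ‖q.1‖ < 1} :=
      measurableSet_lt (continuous_norm.comp continuous_fst).measurable measurable_const
    have h2 : MeasurableSet {q : ℂ × ℝ | q.1 ≠ 0} :=
      (measurableSet_singleton (0:ℂ)).compl.preimage measurable_fst
    have h3 : MeasurableSet {q : ℂ × ℝ | 0 < q.2} :=
      measurableSet_lt measurable_const measurable_snd
    have h4 : MeasurableSet {q : ℂ × ℝ |
        Real.log (‖q.1‖ ^ 2) < v (-(Real.log q.2))} := by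
      refine measurableSet_lt ?_ ?_
      · exact (Real.measurable_log.comp
          ((continuous_norm.comp continuous_fst).measurable.pow_const 2))
      · exact hvmeas.comp ((Real.measurable_log.comp measurable_snd).neg)
    exact h1.inter (h2.inter (h3.inter h4))
  -- key equivalence for z ∈ U \ {0}, τ > 0
  have keyiff : ∀ z : ℂ, z ≠ 0 → ‖z‖ < 1 → ∀ τ : ℝ, 0 < τ →
      (Real.log (‖z‖ ^ 2) < v (-(Real.log τ))
        ↔ τ < Real.exp (-(u (Real.log (‖z‖ ^ 2))))) := by
    intro z hz0 hz1 τ hτ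
    have hzpos : 0 < ‖z‖ ^ 2 := by have := norm_pos_iff.2 hz0; positivity
    have hzlt1 : ‖z‖ ^ 2 < 1 := by have h := norm_nonneg z; nlinarith
    have ha : Real.log (‖z‖ ^ 2) ∈ Set.Iio (0:ℝ) := Real.log_neg hzpos hzlt1
    have hb : v (-(Real.log τ)) ∈ Set.Iio (0:ℝ) := hv_mem _
    constructor
    · intro h
      have := hmono ha hb h
      rw [hv_right] at this
      have h2 : Real.log τ < -(u (Real.log (‖z‖ ^ 2))) := by linarith
      exact (Real.log_lt_iff_lt_exp hτ).1 h2
    · intro h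
      have h2 : Real.log τ < -(u (Real.log (‖z‖ ^ 2))) :=
        (Real.log_lt_iff_lt_exp hτ).2 h
      have h3 : u (Real.log (‖z‖ ^ 2)) < -(Real.log τ) := by linarith
      rw [← hv_right (-(Real.log τ))] at h3
      exact (hmono.lt_iff_lt ha hb).1 h3
  -- z-slices of T
  have slice_z : ∀ z : ℂ, volume (Prod.mk z ⁻¹' T) = (U \ {0}).indicator W z := by
    intro z
    by_cases hz : z ∈ U \ {0}
    · have hz1 : ‖z‖ < 1 := (hmemU z).1 hz.1
      have hz0 : z ≠ 0 := by simpa using hz.2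
      have hset : Prod.mk z ⁻¹' T = Ioo 0 (Real.exp (-(u (Real.log (‖z‖ ^ 2))))) := by
        ext τ
        simp only [hTdef, mem_preimage, mem_setOf_eq, mem_Ioo]
        constructor
        · rintro ⟨-, -, hτ, hlt⟩
          exact ⟨hτ, (keyiff z hz0 hz1 τ hτ).1 hlt⟩
        · rintro ⟨hτ, hlt⟩
          exact ⟨hz1, hz0, hτ, (keyiff z hz0 hz1 τ hτ).2 hlt⟩
      rw [hset, Set.indicator_of_mem hz, Real.volume_Ioo, hW]
      simp
    · have hset : Prod.mk z ⁻¹' T = ∅ := by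
        ext τ
        simp only [hTdef, mem_preimage, mem_setOf_eq, mem_empty_iff_false, iff_false, not_and]
        intro h1 h2
        exact absurd ⟨(hmemU z).2 h1, by simpa using h2⟩ hz
      rw [hset, Set.indicator_of_notMem hz]
      simp
  -- first marginal
  have marg1 : ∫⁻ z in U, W z = (volume.prod volume) T := by
    calc ∫⁻ z in U, W z = ∫⁻ z in U \ {0}, W z := by rw [hUae]
    _ = ∫⁻ z, (U \ {0}).indicator W z := (lintegral_indicator hdiffmeas _).symm
    _ = ∫⁻ z, volume (Prod.mk z ⁻¹' T) := lintegral_congr fun z => (slice_z z).symm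
    _ = (volume.prod volume) T := (Measure.prod_apply hT).symm
  -- per τ bound
  have perτ : ∀ τ : ℝ, volume ((fun z => (z, τ)) ⁻¹' T)
      ≤ ∫⁻ z, F z * T.indicator 1 (z, τ) := by
    intro τ
    have hindic : ∀ z : ℂ, T.indicator (1 : ℂ × ℝ → ℝ≥0∞) (z, τ)
        = ((fun z => (z, τ)) ⁻¹' T).indicator (1 : ℂ → ℝ≥0∞) z := by
      intro z
      simp only [Set.indicator_apply, mem_preimage, Pi.one_apply]
    rcases le_or_gt τ 0 with hτ | hτ
    · have hset : ((fun z => (z, τ)) ⁻¹' T) = ∅ := by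
        ext z
        simp only [hTdef, mem_preimage, mem_setOf_eq, mem_empty_iff_false, iff_false]
        rintro ⟨-, -, h, -⟩
        exact absurd h hτ.not_gt
      rw [hset]
      simp
    · set c := Real.exp (v (-(Real.log τ))) with hc
      have hcpos : 0 < c := Real.exp_pos _
      have hc1 : c < 1 := Real.exp_lt_one_iff.2 (hv_mem _)
      set r := Real.sqrt c with hr
      have hrpos : 0 < r := Real.sqrt_pos.2 hcpos
      have hr1 : r < 1 := by
        rw [hr]
        have := Real.sqrt_lt_sqrt hcpos.le hc1
        simpa using this
      have hset : ((fun z => (z, τ)) ⁻¹' T) = Metric.ball (0:ℂ) r \ {0} := by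
        ext z
        simp only [hTdef, mem_preimage, mem_setOf_eq, mem_diff, Metric.mem_ball,
          Complex.dist_eq, sub_zero, mem_singleton_iff]
        constructor
        · rintro ⟨hz1, hz0, -, hlt⟩
          have hzpos : 0 < ‖z‖ ^ 2 := by have := norm_pos_iff.2 hz0; positivity
          have : ‖z‖ ^ 2 < c := (Real.log_lt_iff_lt_exp hzpos).1 hlt
          exact ⟨(Real.lt_sqrt (norm_nonneg z)).2 this, hz0⟩
        · rintro ⟨hzr, hz0⟩
          have hzpos : 0 < ‖z‖ ^ 2 := by have := norm_pos_iff.2 hz0; positivity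
          have hzc : ‖z‖ ^ 2 < c := (Real.lt_sqrt (norm_nonneg z)).1 hzr
          have hz1 : ‖z‖ < 1 := lt_trans hzr hr1
          exact ⟨hz1, hz0, hτ, (Real.log_lt_iff_lt_exp hzpos).2 hzc⟩
      have hballmeas : MeasurableSet (Metric.ball (0:ℂ) r \ {0}) :=
        Metric.isOpen_ball.measurableSet.diff (measurableSet_singleton 0)
      have hrw : (fun z => F z * T.indicator 1 (z, τ))
          = (Metric.ball (0:ℂ) r \ {0}).indicator F := by
        funext z
        rw [hindic z, hset]
        by_cases hz : z ∈ Metric.ball (0:ℂ) r \ {0}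
        · rw [Set.indicator_of_mem hz, Set.indicator_of_mem hz, Pi.one_apply, mul_one]
        · rw [Set.indicator_of_notMem hz, Set.indicator_of_notMem hz, mul_zero]
      calc volume ((fun z => (z, τ)) ⁻¹' T)
          ≤ volume (Metric.ball (0:ℂ) r) := by
            rw [hset]; exact measure_mono diff_subset
      _ ≤ ∫⁻ z in Metric.ball (0:ℂ) r, ENNReal.ofReal (‖f z‖ ^ 2) :=
            area_lb f hf hf0 hrpos hr1
      _ = ∫⁻ z in Metric.ball (0:ℂ) r, F z := by
            refine setLIntegral_congr_fun Metric.isOpen_ball.measurableSet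
              (fun z hz => ?_)
            rw [hF, Set.indicator_of_mem (Metric.ball_subset_ball hr1.le hz)]
      _ = ∫⁻ z in Metric.ball (0:ℂ) r \ {0}, F z := by
            rw [Measure.restrict_congr_set (diff_null_ae_eq_self h0null)]
      _ = ∫⁻ z, (Metric.ball (0:ℂ) r \ {0}).indicator F z := (lintegral_indicator hballmeas _).symm
      _ = ∫⁻ z, F z * T.indicator 1 (z, τ) := by rw [hrw]
  -- assemble
  have huncurry : Measurable (Function.uncurry fun z τ => F z * T.indicator 1 (z, τ)) := by
    have : (Function.uncurry fun (z:ℂ) (τ:ℝ) => F z * T.indicator 1 (z, τ))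
        = fun q : ℂ × ℝ => F q.1 * T.indicator 1 q := by
      funext q; cases q; rfl
    rw [this]
    exact (hFmeas.comp measurable_fst).mul (measurable_const.indicator hT)
  calc ∫⁻ z in U, W z = (volume.prod volume) T := marg1
  _ = ∫⁻ τ, volume ((fun z => (z, τ)) ⁻¹' T) := Measure.prod_apply_symm hT
  _ ≤ ∫⁻ τ, ∫⁻ z, F z * T.indicator 1 (z, τ) := lintegral_mono perτ
  _ = ∫⁻ z, ∫⁻ τ, F z * T.indicator 1 (z, τ) := (lintegral_lintegral_swap huncurry.aemeasurable).symm
  _ = ∫⁻ z, F z * volume (Prod.mk z ⁻¹' T) := by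
        refine lintegral_congr fun z => ?_
        rw [lintegral_const_mul' _ _ (hFne z)]
        congr 1
        have h5 : (fun τ => T.indicator (1 : ℂ × ℝ → ℝ≥0∞) (z, τ))
            = (Prod.mk z ⁻¹' T).indicator (1 : ℝ → ℝ≥0∞) := by
          funext τ; simp only [Set.indicator_apply, mem_preimage, Pi.one_apply]
        rw [h5, lintegral_indicator_one (measurable_prodMk_left hT)]
  _ = ∫⁻ z, (U \ {0}).indicator (fun z => ENNReal.ofReal (‖f z‖ ^ 2) * W z) z := by
        refine lintegral_congr fun z => ?_
        rw [slice_z z]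
        by_cases hz : z ∈ U \ {0}
        · rw [Set.indicator_of_mem hz, Set.indicator_of_mem hz, hF,
            Set.indicator_of_mem hz.1]
        · rw [Set.indicator_of_notMem hz, Set.indicator_of_notMem hz, mul_zero]
  _ = ∫⁻ z in U \ {0}, ENNReal.ofReal (‖f z‖ ^ 2) * W z :=
        lintegral_indicator hdiffmeas _
  _ = ∫⁻ z in U, ENNReal.ofReal (‖f z‖ ^ 2) * W z := by rw [hUae]
  _ = ∫⁻ z in U, ENNReal.ofReal (‖f z‖ ^ 2 *
        Real.exp (-(u (Real.log (‖z‖ ^ 2))))) := by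
        refine lintegral_congr fun z => ?_
        rw [hW, ENNReal.ofReal_mul (by positivity)]


/-- For a convex, continuous, strictly increasing bijection
`u : (-∞,0) → ℝ` with inverse `v : ℝ → (-∞,0)`, the radial weight
`φ(z) = u(log|z|²)`, and any `f` holomorphic on the unit disc with `f 0 = 1`,
`∫_Δ |f|² e^{-φ} dλ ≥ ∫_{|w|<1} e^{v(-log|w|²)} dλ(w)` in `[0,∞]`. -/
theorem radial_extension_lower_bound
    (u v : ℝ → ℝ)
    (hconv : ConvexOn ℝ (Set.Iio (0 : ℝ)) u)
    (hcont : ContinuousOn u (Set.Iio (0 : ℝ)))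
    (hmono : StrictMonoOn u (Set.Iio (0 : ℝ)))
    (hsurj : u '' Set.Iio (0 : ℝ) = Set.univ)
    (hv_mem : ∀ s : ℝ, v s ∈ Set.Iio (0 : ℝ))
    (hv_right : ∀ s : ℝ, u (v s) = s)
    (hv_left : ∀ t ∈ Set.Iio (0 : ℝ), v (u t) = t)
    (f : ℂ → ℂ) (hf : ∀ z ∈ Metric.ball (0 : ℂ) 1, DifferentiableAt ℂ f z)
    (hf0 : f 0 = 1) :
    ∫⁻ w in Metric.ball (0 : ℂ) 1,
        ENNReal.ofReal (Real.exp (v (-(Real.log (‖w‖ ^ 2)))))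
      ≤ ∫⁻ z in Metric.ball (0 : ℂ) 1,
          ENNReal.ofReal (‖f z‖ ^ 2 *
            Real.exp (-(u (Real.log (‖z‖ ^ 2))))) :=
  (step_one u v hmono hv_mem hv_right).trans
    (step_two u v hmono hv_mem hv_right f hf hf0)
end
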